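/- Let H ≠ 0 be a real number. Define h = −1/(2H), ρ(r) = √(2r² + 1)/(2H), λ(r) = (−√2·r + 2√2·arctan r − arctan(√2·r))/(2H), φ(r,t) = √2·H·t + √2·arctan r − arctan(√2·r), and X(r,t) = (λ(r) + h·φ(r,t), ρ(r)·cos φ(r,t), ρ(r)·sin φ(r,t)) for (r,t) ∈ ℝ². Then the singular points of X are exactly the points with r = 0, and every singular point of X is a (2,5)-cuspidal edge. -/

import Mathlib

noncomputable section

open Set

/-- Euclidean inner product on `ℝ³`. -/
def dot3 (a b : Fin 3 → ℝ) : ℝ := a 0 * b 0 + a 1 * b 1 + a 2 * b 2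

/-- Determinant of the 3×3 matrix with the given rows. -/
def det3 (a b c : Fin 3 → ℝ) : ℝ := Matrix.det (Matrix.of ![a, b, c])

/-- Partial derivative with respect to the first variable. -/
def pdU (X : ℝ × ℝ → Fin 3 → ℝ) (p : ℝ × ℝ) : Fin 3 → ℝ := fderiv ℝ X p ((1:ℝ), (0:ℝ))

/-- Partial derivative with respect to the second variable. -/
def pdV (X : ℝ × ℝ → Fin 3 → ℝ) (p : ℝ × ℝ) : Fin 3 → ℝ := fderiv ℝ X p ((0:ℝ), (1:ℝ))

/-- Directional derivative of `X` along the vector field `ζ`. -/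
def vfD (ζ : ℝ × ℝ → ℝ × ℝ) (X : ℝ × ℝ → Fin 3 → ℝ) : ℝ × ℝ → Fin 3 → ℝ :=
  fun p => fderiv ℝ X p (ζ p)

/-- `k`-fold iterated directional derivative of `X` along the vector field `ζ`. -/
def vfDIter (ζ : ℝ × ℝ → ℝ × ℝ) (k : ℕ) (X : ℝ × ℝ → Fin 3 → ℝ) : ℝ × ℝ → Fin 3 → ℝ :=
  (vfD ζ)^[k] X

/-- `p` is a singular point of `X` : the differential has rank < 2, i.e. the two
partial derivative vectors are linearly dependent. -/
def IsSingularPt (X : ℝ × ℝ → Fin 3 → ℝ) (p : ℝ × ℝ) : Prop :=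
  ¬ LinearIndependent ℝ ![pdU X p, pdV X p]

/-- `f` is a diffeomorphism from the open set `s` onto the open set `t`. -/
def IsDiffeoOn {E F : Type*} [NormedAddCommGroup E] [NormedSpace ℝ E]
    [NormedAddCommGroup F] [NormedSpace ℝ F] (f : E → F) (s : Set E) (t : Set F) : Prop :=
  IsOpen s ∧ IsOpen t ∧ ContDiffOn ℝ (⊤:ℕ∞) f s ∧ Set.BijOn f s t ∧
    ∃ finv : F → E, ContDiffOn ℝ (⊤:ℕ∞) finv t ∧ (∀ x ∈ s, finv (f x) = x) ∧
      ∀ y ∈ t, f (finv y) = y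

/-- `p` is a (2,5)-cuspidal edge of `X` (with domain `D`): up to diffeomorphisms of the
source (taking `0` to `p`, with image inside `D`) and of the target, `X` is
`(u,v) ↦ (u, v², v⁵)`. -/
def IsCuspidalEdge25 (D : Set (ℝ × ℝ)) (X : ℝ × ℝ → Fin 3 → ℝ) (p : ℝ × ℝ) : Prop :=
  ∃ (s t : Set (ℝ × ℝ)) (φ : ℝ × ℝ → ℝ × ℝ)
    (s' t' : Set (Fin 3 → ℝ)) (Φ : (Fin 3 → ℝ) → (Fin 3 → ℝ)),
    ((0:ℝ), (0:ℝ)) ∈ s ∧ φ ((0:ℝ), (0:ℝ)) = p ∧ t ⊆ D ∧ IsDiffeoOn φ s t ∧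
    X p ∈ s' ∧ IsDiffeoOn Φ s' t' ∧
    ∀ w ∈ s, X (φ w) ∈ s' ∧ Φ (X (φ w)) = ![w.1, w.2 ^ 2, w.2 ^ 5]

/-- `X` is a frontal on the open set `U` : it is smooth and locally admits a smooth unit
normal vector field orthogonal to both partial derivatives. -/
def IsFrontalOn (X : ℝ × ℝ → Fin 3 → ℝ) (U : Set (ℝ × ℝ)) : Prop :=
  ContDiffOn ℝ (⊤:ℕ∞) X U ∧ ∀ q ∈ U, ∃ V, IsOpen V ∧ q ∈ V ∧ V ⊆ U ∧
    ∃ n : ℝ × ℝ → Fin 3 → ℝ, ContDiffOn ℝ (⊤:ℕ∞) n V ∧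
      ∀ x ∈ V, dot3 (n x) (n x) = 1 ∧ dot3 (n x) (pdU X x) = 0 ∧ dot3 (n x) (pdV X x) = 0

/-- `p` is a non-degenerate singular point of `X` : it is singular and the signed area
density `λ = det(X_u, X_v, n)` (for a local unit normal `n`) has nonvanishing
differential at `p`. -/
def IsNondegSing (X : ℝ × ℝ → Fin 3 → ℝ) (U : Set (ℝ × ℝ)) (p : ℝ × ℝ) : Prop :=
  IsSingularPt X p ∧ ∃ V, IsOpen V ∧ p ∈ V ∧ V ⊆ U ∧
    ∃ n : ℝ × ℝ → Fin 3 → ℝ, ContDiffOn ℝ (⊤:ℕ∞) n V ∧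
      (∀ x ∈ V, dot3 (n x) (n x) = 1 ∧ dot3 (n x) (pdU X x) = 0 ∧
        dot3 (n x) (pdV X x) = 0) ∧
      fderiv ℝ (fun x => det3 (pdU X x) (pdV X x) (n x)) p ≠ 0

/-- `ρ(r) = √(2r² + 1)/(2H)`. -/
def ρ15 (H r : ℝ) : ℝ := Real.sqrt (2 * r ^ 2 + 1) / (2 * H)

/-- `λ(r) = (−√2·r + 2√2·arctan r − arctan(√2·r))/(2H)`. -/
def lam15 (H r : ℝ) : ℝ :=
  (-(Real.sqrt 2 * r) + 2 * Real.sqrt 2 * Real.arctan r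
    - Real.arctan (Real.sqrt 2 * r)) / (2 * H)

/-- `φ(r,t) = √2·H·t + √2·arctan r − arctan(√2·r)`. -/
def φ15 (H r t : ℝ) : ℝ :=
  Real.sqrt 2 * H * t + Real.sqrt 2 * Real.arctan r - Real.arctan (Real.sqrt 2 * r)

/-- The conjugate of the spacelike Delaunay surface with lightlike axis, profile
`ζ(r) = (−r/(1+r²) + arctan r)/(8H²)`, with `h = −1/(2H)`:
`X(r,t) = (λ(r) + h·φ(r,t), ρ(r)·cos φ(r,t), ρ(r)·sin φ(r,t))`. -/
def X15 (H : ℝ) (p : ℝ × ℝ) : Fin 3 → ℝ :=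
  ![lam15 H p.1 + -(1 / (2 * H)) * φ15 H p.1 p.2,
    ρ15 H p.1 * Real.cos (φ15 H p.1 p.2),
    ρ15 H p.1 * Real.sin (φ15 H p.1 p.2)]


namespace CD25
open Real ContinuousLinearMap

def gd (r : ℝ) : ℝ := Real.sqrt 2 / (1 + r ^ 2) - Real.sqrt 2 / (1 + 2 * r ^ 2)

def lamd (H r : ℝ) : ℝ :=
  (-Real.sqrt 2 + 2 * Real.sqrt 2 / (1 + r ^ 2) - Real.sqrt 2 / (1 + 2 * r ^ 2)) / (2 * H)

def rhod (H r : ℝ) : ℝ := 2 * r / (Real.sqrt (2 * r ^ 2 + 1) * (2 * H))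

abbrev e1 : ℝ × ℝ →L[ℝ] ℝ := ContinuousLinearMap.fst ℝ ℝ ℝ
abbrev e2 : ℝ × ℝ →L[ℝ] ℝ := ContinuousLinearMap.snd ℝ ℝ ℝ

lemma sq_sqrt2 : Real.sqrt 2 ^ 2 = 2 := Real.sq_sqrt (by norm_num)

lemma two_sq_add_one_pos (r : ℝ) : (0:ℝ) < 2 * r ^ 2 + 1 := by positivity

lemma clm_ext2 {L M : ℝ × ℝ →L[ℝ] ℝ}
    (h1 : L (1, 0) = M (1, 0)) (h2 : L (0, 1) = M (0, 1)) : L = M := by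
  refine ContinuousLinearMap.ext fun v => ?_
  have hv : (v : ℝ × ℝ) = v.1 • ((1:ℝ), (0:ℝ)) + v.2 • ((0:ℝ), (1:ℝ)) := by
    simp [Prod.ext_iff]
  rw [hv, map_add, map_add, map_smul, map_smul, map_smul, map_smul, h1, h2]

lemma hasDerivAt_arctan_sqrt2 (r : ℝ) :
    HasDerivAt (fun r : ℝ => Real.arctan (Real.sqrt 2 * r))
      (Real.sqrt 2 / (1 + 2 * r ^ 2)) r := by
  have h := (Real.hasDerivAt_arctan (Real.sqrt 2 * r)).comp r
    ((hasDerivAt_id r).const_mul (Real.sqrt 2))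
  refine h.congr_deriv (Eq.symm ?_)
  rw [mul_pow, sq_sqrt2]
  field_simp

lemma hasDerivAt_lam15 (H : ℝ) (r : ℝ) : HasDerivAt (lam15 H) (lamd H r) r := by
  have h1 := ((hasDerivAt_id r).const_mul (Real.sqrt 2)).neg
  have h2 := (Real.hasDerivAt_arctan r).const_mul (2 * Real.sqrt 2)
  have h3 := hasDerivAt_arctan_sqrt2 r
  have h := ((h1.add h2).sub h3).div_const (2 * H)
  refine h.congr_deriv (Eq.symm ?_)
  unfold lamd
  ring

lemma hasDerivAt_rho15 (H : ℝ) (r : ℝ) : HasDerivAt (ρ15 H) (rhod H r) r := by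
  have hin : HasDerivAt (fun r : ℝ => 2 * r ^ 2 + 1) (2 * (2 * r)) r := by
    simpa using (((hasDerivAt_pow 2 r)).const_mul 2).add_const 1
  have h := ((Real.hasDerivAt_sqrt (ne_of_gt (two_sq_add_one_pos r))).comp r hin).div_const (2 * H)
  refine h.congr_deriv (Eq.symm ?_)
  unfold rhod
  field_simp

lemma hasFDerivAt_phi15 (H : ℝ) (p : ℝ × ℝ) :
    HasFDerivAt (fun q : ℝ × ℝ => φ15 H q.1 q.2)
      ((gd p.1) • e1 + (Real.sqrt 2 * H) • e2) p := by
  have h1 : HasFDerivAt (fun q : ℝ × ℝ => Real.sqrt 2 * H * q.2)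
      ((Real.sqrt 2 * H) • e2) p := (hasFDerivAt_snd.const_mul _)
  have h2 : HasFDerivAt (fun q : ℝ × ℝ => Real.sqrt 2 * Real.arctan q.1)
      ((Real.sqrt 2 * (1 / (1 + p.1 ^ 2))) • e1) p :=
    ((Real.hasDerivAt_arctan p.1).const_mul (Real.sqrt 2)).comp_hasFDerivAt p hasFDerivAt_fst
  have h3 : HasFDerivAt (fun q : ℝ × ℝ => Real.arctan (Real.sqrt 2 * q.1))
      ((Real.sqrt 2 / (1 + 2 * p.1 ^ 2)) • e1) p :=
    (hasDerivAt_arctan_sqrt2 p.1).comp_hasFDerivAt p hasFDerivAt_fst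
  have h := (h1.add h2).sub h3
  refine h.congr_fderiv (Eq.symm ?_)
  apply clm_ext2 <;> simp [gd] <;> ring

def Xr (H : ℝ) (p : ℝ × ℝ) : Fin 3 → ℝ :=
  ![lamd H p.1 + -(1 / (2 * H)) * gd p.1,
    rhod H p.1 * Real.cos (φ15 H p.1 p.2) - ρ15 H p.1 * gd p.1 * Real.sin (φ15 H p.1 p.2),
    rhod H p.1 * Real.sin (φ15 H p.1 p.2) + ρ15 H p.1 * gd p.1 * Real.cos (φ15 H p.1 p.2)]

def Xt (H : ℝ) (p : ℝ × ℝ) : Fin 3 → ℝ :=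
  ![-(1 / (2 * H)) * (Real.sqrt 2 * H),
    -(ρ15 H p.1 * (Real.sqrt 2 * H) * Real.sin (φ15 H p.1 p.2)),
    ρ15 H p.1 * (Real.sqrt 2 * H) * Real.cos (φ15 H p.1 p.2)]

def XD (H : ℝ) (p : ℝ × ℝ) : ℝ × ℝ →L[ℝ] (Fin 3 → ℝ) :=
  ContinuousLinearMap.pi (fun i => (Xr H p i) • e1 + (Xt H p i) • e2)

lemma hasFDerivAt_X15 (H : ℝ) (p : ℝ × ℝ) : HasFDerivAt (X15 H) (XD H p) p := by
  have hφ := hasFDerivAt_phi15 H p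
  have hρ : HasFDerivAt (fun q : ℝ × ℝ => ρ15 H q.1) ((rhod H p.1) • e1) p :=
    (hasDerivAt_rho15 H p.1).comp_hasFDerivAt p hasFDerivAt_fst
  have hlam : HasFDerivAt (fun q : ℝ × ℝ => lam15 H q.1) ((lamd H p.1) • e1) p :=
    (hasDerivAt_lam15 H p.1).comp_hasFDerivAt p hasFDerivAt_fst
  have hcos : HasFDerivAt (fun q : ℝ × ℝ => Real.cos (φ15 H q.1 q.2))
      ((-Real.sin (φ15 H p.1 p.2)) • ((gd p.1) • e1 + (Real.sqrt 2 * H) • e2)) p :=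
    (Real.hasDerivAt_cos _).comp_hasFDerivAt p hφ
  have hsin : HasFDerivAt (fun q : ℝ × ℝ => Real.sin (φ15 H q.1 q.2))
      ((Real.cos (φ15 H p.1 p.2)) • ((gd p.1) • e1 + (Real.sqrt 2 * H) • e2)) p :=
    (Real.hasDerivAt_sin _).comp_hasFDerivAt p hφ
  have key : ∀ i, HasFDerivAt (fun q => X15 H q i)
      ((Xr H p i) • e1 + (Xt H p i) • e2) p := by
    intro i
    fin_cases i
    · simp only [X15, Matrix.cons_val_zero]
      have h := hlam.add (hφ.const_mul (-(1 / (2 * H))))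
      refine h.congr_fderiv (Eq.symm ?_)
      apply clm_ext2 <;> simp [Xr, Xt] <;> ring
    · simp only [X15, Matrix.cons_val_one, Matrix.head_cons]
      have h := hρ.mul hcos
      refine h.congr_fderiv (Eq.symm ?_)
      apply clm_ext2 <;> simp [Xr, Xt] <;> ring
    · simp only [X15, Matrix.cons_val_two, Matrix.tail_cons, Matrix.head_cons]
      have h := hρ.mul hsin
      refine h.congr_fderiv (Eq.symm ?_)
      apply clm_ext2 <;> simp [Xr, Xt] <;> ring
  exact hasFDerivAt_pi.2 key

lemma pdU_X15 (H : ℝ) (p : ℝ × ℝ) : pdU (X15 H) p = Xr H p := by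
  unfold pdU
  rw [(hasFDerivAt_X15 H p).fderiv]
  funext i
  simp [XD]

lemma pdV_X15 (H : ℝ) (p : ℝ × ℝ) : pdV (X15 H) p = Xt H p := by
  unfold pdV
  rw [(hasFDerivAt_X15 H p).fderiv]
  funext i
  simp [XD]

lemma singular_iff (H : ℝ) (hH : H ≠ 0) (p : ℝ × ℝ) :
    IsSingularPt (X15 H) p ↔ p.1 = 0 := by
  have hs2 : (0:ℝ) < Real.sqrt 2 := by positivity
  have hsq : Real.sqrt (2 * p.1 ^ 2 + 1) ≠ 0 :=
    ne_of_gt (Real.sqrt_pos.2 (two_sq_add_one_pos p.1))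
  unfold IsSingularPt
  rw [pdU_X15, pdV_X15]
  constructor
  · intro h
    by_contra hr
    apply h
    rw [linearIndependent_fin2]
    constructor
    · intro h0
      have h00 := congr_fun h0 0
      simp only [Matrix.cons_val_one, Matrix.head_cons, Xt, Matrix.cons_val_zero,
        Pi.zero_apply] at h00
      have he : -(1 / (2 * H)) * (Real.sqrt 2 * H) = -(Real.sqrt 2 / 2) := by
        field_simp
      rw [he] at h00
      nlinarith
    · intro a ha
      have h1 := congr_fun ha 1
      have h2 := congr_fun ha 2
      simp only [Matrix.cons_val_one, Matrix.head_cons, Matrix.cons_val_zero, Pi.smul_apply,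
        smul_eq_mul, Xr, Xt, Matrix.cons_val_two, Matrix.tail_cons] at h1 h2
      have py := Real.sin_sq_add_cos_sq (φ15 H p.1 p.2)
      have hrd : rhod H p.1 = 0 := by
        linear_combination (-(Real.cos (φ15 H p.1 p.2))) * h1
          - (Real.sin (φ15 H p.1 p.2)) * h2 - (rhod H p.1) * py
      unfold rhod at hrd
      field_simp [hsq, hH] at hrd
      all_goals exact hr (by simpa using hrd)
  · intro h0 hli
    have hne := hli.ne_zero 0
    apply hne
    have hgd : gd (0:ℝ) = 0 := by simp [gd]
    have hlamd : lamd H 0 = 0 := by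
      unfold lamd
      rw [div_eq_zero_iff]
      left
      ring
    have hrhod : rhod H 0 = 0 := by simp [rhod]
    funext i
    fin_cases i <;>
      simp [Xr, h0, hgd, hlamd, hrhod]
end CD25
namespace CD25
open Real Filter
open scoped NNReal ENNReal

def cc : ℕ → ℝ := fun n => (-1) ^ n * (2 ^ (n + 1) - 1) / (2 * n + 5)

def Fs : FormalMultilinearSeries ℝ ℝ ℝ := FormalMultilinearSeries.ofScalars ℝ cc

def Fsum : ℝ → ℝ := FormalMultilinearSeries.ofScalarsSum cc

lemma abs_cc_le (n : ℕ) : |cc n| ≤ 2 ^ (n + 1) := by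
  have hp : (1:ℝ) ≤ 2 ^ (n + 1) := one_le_pow₀ (by norm_num)
  have hd : (1:ℝ) ≤ 2 * (n:ℝ) + 5 := by
    have : (0:ℝ) ≤ (n:ℝ) := Nat.cast_nonneg n
    linarith
  unfold cc
  rw [abs_div, abs_mul, abs_pow, abs_neg, abs_one, one_pow, one_mul,
    abs_of_pos (by positivity : (0:ℝ) < 2 * (n:ℝ) + 5),
    abs_of_nonneg (by linarith : (0:ℝ) ≤ 2 ^ (n + 1) - 1)]
  rw [div_le_iff₀ (by positivity)]
  nlinarith [pow_pos (by norm_num : (0:ℝ) < 2) (n+1)]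

lemma radius_ge : ((1/4 : ℝ≥0) : ℝ≥0∞) ≤ Fs.radius := by
  apply Fs.le_radius_of_bound 2
  intro n
  have hn : ‖Fs n‖ = |cc n| := by
    unfold Fs
    rw [FormalMultilinearSeries.ofScalars_norm, Real.norm_eq_abs]
  rw [hn]
  have h1 : |cc n| * ((1/4 : ℝ≥0) : ℝ) ^ n ≤ 2 ^ (n + 1) * (1/4) ^ n := by
    push_cast
    apply mul_le_mul_of_nonneg_right (abs_cc_le n) (by positivity)
  refine h1.trans ?_
  rw [pow_succ]
  have : (2:ℝ) ^ n * (1/4) ^ n ≤ 1 := by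
    rw [← mul_pow]
    norm_num
    exact pow_le_one₀ (by norm_num) (by norm_num)
  nlinarith [pow_pos (by norm_num : (0:ℝ) < 2) n]

lemma Fsum_analyticAt {x : ℝ} (hx : |x| < 1/4) : AnalyticAt ℝ Fsum x := by
  have hrad : (0 : ℝ≥0∞) < Fs.radius := lt_of_lt_of_le (by norm_num) radius_ge
  refine (Fs.hasFPowerSeriesOnBall hrad).analyticAt_of_mem ?_
  rw [EMetric.mem_ball, edist_zero_right]
  refine lt_of_lt_of_le ?_ radius_ge
  rw [enorm_eq_nnnorm, ENNReal.coe_lt_coe, ← NNReal.coe_lt_coe, coe_nnnorm, Real.norm_eq_abs]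
  simpa using hx

lemma hasSum_Fsum {x : ℝ} (hx : |x| ≤ 1/8) :
    HasSum (fun n => cc n * x ^ n) (Fsum x) := by
  have hsum : Summable (fun n => cc n * x ^ n) := by
    apply Summable.of_norm_bounded (g := fun n : ℕ => 2 * (1/4:ℝ) ^ n)
    · exact (summable_geometric_of_lt_one (by norm_num) (by norm_num)).mul_left 2
    · intro n
      rw [norm_mul, norm_pow, Real.norm_eq_abs, Real.norm_eq_abs]
      calc |cc n| * |x| ^ n ≤ 2 ^ (n + 1) * (1/8) ^ n := by
            apply mul_le_mul (abs_cc_le n) (pow_le_pow_left₀ (abs_nonneg x) hx n)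
              (by positivity) (by positivity)
        _ ≤ 2 * (1/4) ^ n := by
            rw [pow_succ, mul_comm ((2:ℝ)^n) 2, mul_assoc, ← mul_pow]
            norm_num
  have : Fsum x = ∑' n, cc n * x ^ n := by
    simpa [Fsum, smul_eq_mul] using FormalMultilinearSeries.ofScalars_sum_eq cc x
  rw [this]
  exact hsum.hasSum

lemma Fsum_zero : Fsum 0 = 1/5 := by
  unfold Fsum
  rw [FormalMultilinearSeries.ofScalarsSum_zero]
  norm_num [cc]

lemma w_eq {v : ℝ} (hv : |v| ≤ 1/8) :
    2 * Real.sqrt 2 * Real.arctan v - Real.arctan (Real.sqrt 2 * v)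
      = Real.sqrt 2 * v - 2 * Real.sqrt 2 * v ^ 5 * Fsum (v ^ 2) := by
  have h2 : (0:ℝ) < Real.sqrt 2 := by positivity
  have h2' : Real.sqrt 2 < 2 := by
    nlinarith [Real.sq_sqrt (by norm_num : (0:ℝ) ≤ 2)]
  have hA := Real.hasSum_arctan (x := v) (by rw [Real.norm_eq_abs]; linarith)
  have hB := Real.hasSum_arctan (x := Real.sqrt 2 * v)
    (by rw [Real.norm_eq_abs, abs_mul, abs_of_pos h2]; nlinarith [abs_nonneg v])
  set f : ℕ → ℝ :=
    fun n => Real.sqrt 2 * (-1)^n * (2 - 2^n) * v^(2*n+1) / (2*(n:ℝ)+1) with hf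
  have hb : HasSum f (2 * Real.sqrt 2 * Real.arctan v - Real.arctan (Real.sqrt 2 * v)) := by
    have h := (hA.mul_left (2 * Real.sqrt 2)).sub hB
    refine (congrArg (fun g => HasSum g _) (funext fun n => ?_ : f = _)).mpr h
    have hp : (Real.sqrt 2) ^ (2*n+1) = 2^n * Real.sqrt 2 := by
      rw [pow_succ, pow_mul, Real.sq_sqrt (by norm_num : (0:ℝ) ≤ 2)]
    rw [hf]
    simp only
    rw [mul_pow, hp]
    push_cast
    ring
  have hshift : HasSum (fun n => f (n + 2))
      (2 * Real.sqrt 2 * Real.arctan v - Real.arctan (Real.sqrt 2 * v)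
        - Real.sqrt 2 * v) := by
    refine (hasSum_nat_add_iff 2).2 ?_
    refine (congrArg (fun a => HasSum f a) ?_).mpr hb
    have hf0 : f 0 = Real.sqrt 2 * v := by rw [hf]; norm_num
    have hf1 : f 1 = 0 := by rw [hf]; norm_num
    rw [Finset.sum_range_succ, Finset.sum_range_one, hf0, hf1]
    ring
  have hS := (hasSum_Fsum (x := v^2)
    (by rw [abs_pow]; nlinarith [abs_nonneg v, hv])).mul_left
      (-2 * Real.sqrt 2 * v ^ 5)
  have heq : (fun n => -2 * Real.sqrt 2 * v ^ 5 * (cc n * (v^2)^n))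
      = fun n => f (n + 2) := by
    funext n
    rw [hf]
    simp only
    have he : 2*(n+2)+1 = 2*n+5 := by ring
    rw [he]
    rw [show v ^ (2*n+5) = (v^2)^n * v^5 by rw [← pow_mul, ← pow_add]]
    unfold cc
    have h4 : ((-1:ℝ))^(n+2) = (-1)^n := by rw [pow_add]; norm_num
    have h5 : (2:ℝ)^(n+2) = 4 * 2^n := by rw [pow_add]; ring
    rw [h4, h5]
    push_cast
    have hd1 : (2*(n:ℝ)+5) ≠ 0 := by positivity
    field_simp
    ring
  rw [heq] at hS
  have huniq := hshift.unique hS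
  linarith [huniq]

end CD25
namespace CD25
open Real

def Efun (H x : ℝ) : ℝ := (-Real.sqrt 2 / H) * Fsum x

lemma Efun_ne_zero {H : ℝ} (hH : H ≠ 0) {x : ℝ} (hF : Fsum x ≠ 0) : Efun H x ≠ 0 := by
  unfold Efun
  have hs2 : Real.sqrt 2 ≠ 0 := by positivity
  exact mul_ne_zero (div_ne_zero (neg_ne_zero.2 hs2) hH) hF

lemma lam15_eq (H : ℝ) (hH : H ≠ 0) {v : ℝ} (hv : |v| ≤ 1/8) :
    lam15 H v = v ^ 5 * Efun H (v ^ 2) := by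
  unfold lam15 Efun
  have hw := w_eq hv
  have h2H : (2:ℝ) * H ≠ 0 := by simp [hH]
  rw [div_eq_iff h2H]
  have hr : v ^ 5 * (-Real.sqrt 2 / H * Fsum (v ^ 2)) * (2 * H)
      = -2 * Real.sqrt 2 * v ^ 5 * Fsum (v ^ 2) := by
    field_simp
  rw [hr]
  linear_combination hw

lemma exists_good_eps : ∃ ε : ℝ, 0 < ε ∧ ε ≤ 1/8 ∧ ∀ x : ℝ, |x| < ε → Fsum x ≠ 0 := by
  have hc : ContinuousAt Fsum 0 := (Fsum_analyticAt (by norm_num)).continuousAt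
  have hne : ∀ᶠ x in nhds 0, Fsum x ≠ 0 := hc.eventually_ne (by rw [Fsum_zero]; norm_num)
  rw [Metric.eventually_nhds_iff] at hne
  obtain ⟨δ, hδ, h⟩ := hne
  refine ⟨min δ (1/8), by positivity, min_le_right _ _, fun x hx => ?_⟩
  apply h
  rw [Real.dist_eq, sub_zero]
  exact lt_of_lt_of_le hx (min_le_left _ _)

def gfun (r : ℝ) : ℝ := Real.sqrt 2 * Real.arctan r - Real.arctan (Real.sqrt 2 * r)

lemma contDiff_gfun : ContDiff ℝ (⊤:ℕ∞) gfun := by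
  unfold gfun
  exact (contDiff_const.mul Real.contDiff_arctan).sub
    (Real.contDiff_arctan.comp (contDiff_const.mul contDiff_id))

def phm (H φ0 : ℝ) (w : ℝ × ℝ) : ℝ × ℝ :=
  (w.2, (w.1 + φ0 - gfun w.2) / (Real.sqrt 2 * H))

def phminv (H φ0 : ℝ) (q : ℝ × ℝ) : ℝ × ℝ :=
  (Real.sqrt 2 * H * q.2 + gfun q.1 - φ0, q.1)

lemma phm_left_inv {H : ℝ} (hH : H ≠ 0) (φ0 : ℝ) (w : ℝ × ℝ) :
    phminv H φ0 (phm H φ0 w) = w := by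
  have h2H : Real.sqrt 2 * H ≠ 0 := by
    have : Real.sqrt 2 ≠ 0 := by positivity
    exact mul_ne_zero this hH
  unfold phm phminv
  refine Prod.ext ?_ rfl
  show Real.sqrt 2 * H * ((w.1 + φ0 - gfun w.2) / (Real.sqrt 2 * H)) + gfun w.2 - φ0 = w.1
  field_simp
  ring

lemma phm_right_inv {H : ℝ} (hH : H ≠ 0) (φ0 : ℝ) (q : ℝ × ℝ) :
    phm H φ0 (phminv H φ0 q) = q := by
  have h2H : Real.sqrt 2 * H ≠ 0 := by
    have : Real.sqrt 2 ≠ 0 := by positivity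
    exact mul_ne_zero this hH
  unfold phm phminv
  refine Prod.ext rfl ?_
  show (Real.sqrt 2 * H * q.2 + gfun q.1 - φ0 + φ0 - gfun q.1) / (Real.sqrt 2 * H) = q.2
  field_simp
  ring

lemma contDiff_phm (H φ0 : ℝ) : ContDiff ℝ (⊤:ℕ∞) (phm H φ0) := by
  unfold phm
  refine ContDiff.prodMk contDiff_snd ?_
  exact ((contDiff_fst.add contDiff_const).sub (contDiff_gfun.comp contDiff_snd)).div_const _

lemma contDiff_phminv (H φ0 : ℝ) : ContDiff ℝ (⊤:ℕ∞) (phminv H φ0) := by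
  unfold phminv
  refine ContDiff.prodMk ?_ contDiff_fst
  exact ((contDiff_const.mul contDiff_snd).add (contDiff_gfun.comp contDiff_fst)).sub
    contDiff_const

lemma isDiffeoOn_phm {H : ℝ} (hH : H ≠ 0) (φ0 : ℝ) {s : Set (ℝ × ℝ)} (hs : IsOpen s) :
    IsDiffeoOn (phm H φ0) s (phminv H φ0 ⁻¹' s) := by
  refine ⟨hs, (contDiff_phminv H φ0).continuous.isOpen_preimage _ hs,
    (contDiff_phm H φ0).contDiffOn, ?_,
    phminv H φ0, (contDiff_phminv H φ0).contDiffOn,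
    fun w _ => phm_left_inv hH φ0 w, fun q _ => phm_right_inv hH φ0 q⟩
  have hinv : Set.InvOn (phminv H φ0) (phm H φ0) s (phminv H φ0 ⁻¹' s) :=
    ⟨fun w _ => phm_left_inv hH φ0 w, fun q _ => phm_right_inv hH φ0 q⟩
  refine hinv.bijOn ?_ ?_
  · intro w hw
    show phminv H φ0 (phm H φ0 w) ∈ s
    rw [phm_left_inv hH φ0 w]
    exact hw
  · intro q hq
    exact hq

lemma X15_phm {H : ℝ} (hH : H ≠ 0) (φ0 : ℝ) (w : ℝ × ℝ) :
    X15 H (phm H φ0 w) =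
      ![lam15 H w.2 + -(1 / (2 * H)) * (w.1 + φ0),
        ρ15 H w.2 * Real.cos (w.1 + φ0),
        ρ15 H w.2 * Real.sin (w.1 + φ0)] := by
  have h2H : Real.sqrt 2 * H ≠ 0 := by
    have : Real.sqrt 2 ≠ 0 := by positivity
    exact mul_ne_zero this hH
  have hphi : φ15 H (phm H φ0 w).1 (phm H φ0 w).2 = w.1 + φ0 := by
    unfold phm φ15 gfun
    field_simp
    ring
  unfold X15
  rw [hphi]
  congr 1

end CD25
namespace CD25
open Real

def y2f (φ0 : ℝ) (x : Fin 3 → ℝ) : ℝ := x 1 * Real.cos φ0 + x 2 * Real.sin φ0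
def y3f (φ0 : ℝ) (x : Fin 3 → ℝ) : ℝ := -(x 1) * Real.sin φ0 + x 2 * Real.cos φ0
def qqf (H : ℝ) (x : Fin 3 → ℝ) : ℝ := (4 * H ^ 2 * ((x 1) ^ 2 + (x 2) ^ 2) - 1) / 2

def Phm (H φ0 : ℝ) (x : Fin 3 → ℝ) : Fin 3 → ℝ :=
  ![Real.arctan (y3f φ0 x / y2f φ0 x), qqf H x,
    (x 0 + (Real.arctan (y3f φ0 x / y2f φ0 x) + φ0) / (2 * H)) / Efun H (qqf H x)]

def Psm (H φ0 : ℝ) (y : Fin 3 → ℝ) : Fin 3 → ℝ :=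
  ![y 2 * Efun H (y 1) - (y 0 + φ0) / (2 * H),
    Real.sqrt (2 * (y 1) + 1) / (2 * H) * Real.cos (y 0 + φ0),
    Real.sqrt (2 * (y 1) + 1) / (2 * H) * Real.sin (y 0 + φ0)]

def sA (H φ0 ε : ℝ) : Set (Fin 3 → ℝ) :=
  {x | 0 < H * y2f φ0 x} ∩ {x | |qqf H x| < ε}

def tA (ε : ℝ) : Set (Fin 3 → ℝ) :=
  {y | |y 0| < Real.pi / 2} ∩ {y | |y 1| < ε}

lemma isOpen_sA (H φ0 ε : ℝ) : IsOpen (sA H φ0 ε) := by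
  have h1 : Continuous fun x : Fin 3 → ℝ => H * y2f φ0 x := by unfold y2f; fun_prop
  have h2 : Continuous fun x : Fin 3 → ℝ => |qqf H x| := by unfold qqf; fun_prop
  exact (isOpen_lt continuous_const h1).inter (isOpen_lt h2 continuous_const)

lemma isOpen_tA (ε : ℝ) : IsOpen (tA ε) := by
  have h1 : Continuous fun y : Fin 3 → ℝ => |y 0| := by fun_prop
  have h2 : Continuous fun y : Fin 3 → ℝ => |y 1| := by fun_prop
  exact (isOpen_lt h1 continuous_const).inter (isOpen_lt h2 continuous_const)

lemma y2f_ne_zero {H φ0 ε : ℝ} {x : Fin 3 → ℝ} (hx : x ∈ sA H φ0 ε) : y2f φ0 x ≠ 0 := by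
  intro h
  have := hx.1
  rw [Set.mem_setOf_eq, h, mul_zero] at this
  exact lt_irrefl 0 this

lemma y_sq_eq {φ0 : ℝ} (x : Fin 3 → ℝ) :
    y2f φ0 x ^ 2 + y3f φ0 x ^ 2 = (x 1) ^ 2 + (x 2) ^ 2 := by
  unfold y2f y3f
  linear_combination ((x 1) ^ 2 + (x 2) ^ 2) * (Real.sin_sq_add_cos_sq φ0)

lemma contDiffAt_Phm {H φ0 ε : ℝ} (hH : H ≠ 0) (hε : ε ≤ 1/8)
    (hF : ∀ z : ℝ, |z| < ε → Fsum z ≠ 0)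
    {x : Fin 3 → ℝ} (hx : x ∈ sA H φ0 ε) :
    ContDiffAt ℝ (⊤:ℕ∞) (Phm H φ0) x := by
  have hy2 : y2f φ0 x ≠ 0 := y2f_ne_zero hx
  have hqq : |qqf H x| < ε := hx.2
  have hy2c : ContDiff ℝ (⊤:ℕ∞) (y2f φ0) := by unfold y2f; fun_prop
  have hy3c : ContDiff ℝ (⊤:ℕ∞) (y3f φ0) := by unfold y3f; fun_prop
  have hqqc : ContDiff ℝ (⊤:ℕ∞) (qqf H) := by
    unfold qqf
    exact ContDiff.div_const (by fun_prop) 2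
  have hdiv : ContDiffAt ℝ (⊤:ℕ∞) (fun x => y3f φ0 x / y2f φ0 x) x :=
    hy3c.contDiffAt.div hy2c.contDiffAt hy2
  have harc : ContDiffAt ℝ (⊤:ℕ∞) (fun x => Real.arctan (y3f φ0 x / y2f φ0 x)) x :=
    Real.contDiff_arctan.contDiffAt.comp x hdiv
  have hEat : ContDiffAt ℝ (⊤:ℕ∞) (Efun H) (qqf H x) := by
    unfold Efun
    exact contDiffAt_const.mul (Fsum_analyticAt (by linarith)).contDiffAt
  have hEcomp : ContDiffAt ℝ (⊤:ℕ∞) (fun x => Efun H (qqf H x)) x :=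
    hEat.comp x hqqc.contDiffAt
  have hEne : Efun H (qqf H x) ≠ 0 := Efun_ne_zero hH (hF _ hqq)
  apply contDiffAt_pi.2
  intro i
  fin_cases i
  · simpa only [Phm, Fin.zero_eta, Matrix.cons_val_zero] using harc
  · simpa only [Phm, Fin.mk_one, Matrix.cons_val_one, Matrix.cons_val_zero, Matrix.head_cons] using hqqc.contDiffAt
  · simp only [Phm, Matrix.cons_val_two, Matrix.tail_cons, Matrix.head_cons]
    exact ((ContinuousLinearMap.proj 0 : (Fin 3 → ℝ) →L[ℝ] ℝ).contDiff.contDiffAt.add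
      ((harc.add contDiffAt_const).div_const _)).div hEcomp hEne

lemma contDiffAt_Psm {H φ0 ε : ℝ} (hH : H ≠ 0) (hε : ε ≤ 1/8)
    {y : Fin 3 → ℝ} (hy : y ∈ tA ε) :
    ContDiffAt ℝ (⊤:ℕ∞) (Psm H φ0) y := by
  have hy1 : |y 1| < ε := hy.2
  have hpos : (0:ℝ) < 2 * (y 1) + 1 := by
    have := abs_lt.1 hy1
    nlinarith [this.1]
  have hy1c : ContDiff ℝ (⊤:ℕ∞) (fun y : Fin 3 → ℝ => y 1) :=
    (ContinuousLinearMap.proj 1 : (Fin 3 → ℝ) →L[ℝ] ℝ).contDiff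
  have hy0c : ContDiff ℝ (⊤:ℕ∞) (fun y : Fin 3 → ℝ => y 0) :=
    (ContinuousLinearMap.proj 0 : (Fin 3 → ℝ) →L[ℝ] ℝ).contDiff
  have hy2c : ContDiff ℝ (⊤:ℕ∞) (fun y : Fin 3 → ℝ => y 2) :=
    (ContinuousLinearMap.proj 2 : (Fin 3 → ℝ) →L[ℝ] ℝ).contDiff
  have hEat : ContDiffAt ℝ (⊤:ℕ∞) (Efun H) (y 1) := by
    unfold Efun
    exact contDiffAt_const.mul (Fsum_analyticAt (by linarith)).contDiffAt
  have hsqrtc : ContDiffAt ℝ (⊤:ℕ∞) (fun y : Fin 3 → ℝ => Real.sqrt (2 * (y 1) + 1)) y := by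
    refine (Real.contDiffAt_sqrt (ne_of_gt hpos)).comp y ?_
    exact ((contDiff_const.mul hy1c).add contDiff_const).contDiffAt
  apply contDiffAt_pi.2
  intro i
  fin_cases i
  · simp only [Psm, Matrix.cons_val_zero]
    exact (hy2c.contDiffAt.mul (hEat.comp y hy1c.contDiffAt)).sub
      (((hy0c.contDiffAt.add contDiffAt_const)).div_const _)
  · simp only [Psm, Matrix.cons_val_one, Matrix.head_cons]
    exact (hsqrtc.div_const _).mul
      (Real.contDiff_cos.contDiffAt.comp y (hy0c.contDiffAt.add contDiffAt_const))
  · simp only [Psm, Matrix.cons_val_two, Matrix.tail_cons, Matrix.head_cons]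
    exact (hsqrtc.div_const _).mul
      (Real.contDiff_sin.contDiffAt.comp y (hy0c.contDiffAt.add contDiffAt_const))

end CD25
namespace CD25
open Real

lemma key_cos_sin {H φ0 ε : ℝ} (hH : H ≠ 0) {x : Fin 3 → ℝ} (hx : x ∈ sA H φ0 ε) :
    Real.sqrt (2 * qqf H x + 1) / (2 * H)
        * Real.cos (Real.arctan (y3f φ0 x / y2f φ0 x)) = y2f φ0 x ∧
    Real.sqrt (2 * qqf H x + 1) / (2 * H)
        * Real.sin (Real.arctan (y3f φ0 x / y2f φ0 x)) = y3f φ0 x := by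
  have hy2 : y2f φ0 x ≠ 0 := y2f_ne_zero hx
  have hy23 := y_sq_eq (φ0 := φ0) x
  have hR2pos : (0:ℝ) < (x 1) ^ 2 + (x 2) ^ 2 := by
    rw [← hy23]
    positivity
  have hsR2 : (0:ℝ) < Real.sqrt ((x 1) ^ 2 + (x 2) ^ 2) := Real.sqrt_pos.2 hR2pos
  have h2qq : 2 * qqf H x + 1 = (2 * H) ^ 2 * ((x 1) ^ 2 + (x 2) ^ 2) := by
    unfold qqf; ring
  have hsq : Real.sqrt (2 * qqf H x + 1)
      = |2 * H| * Real.sqrt ((x 1) ^ 2 + (x 2) ^ 2) := by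
    rw [h2qq, Real.sqrt_mul (sq_nonneg _), Real.sqrt_sq_eq_abs]
  have hone : 1 + (y3f φ0 x / y2f φ0 x) ^ 2
      = ((x 1) ^ 2 + (x 2) ^ 2) / (y2f φ0 x) ^ 2 := by
    field_simp
    linear_combination hy23
  have hsqq : Real.sqrt (1 + (y3f φ0 x / y2f φ0 x) ^ 2)
      = Real.sqrt ((x 1) ^ 2 + (x 2) ^ 2) / |y2f φ0 x| := by
    rw [hone, Real.sqrt_div (le_of_lt hR2pos), Real.sqrt_sq_eq_abs]
  have habs : |2 * H| * |y2f φ0 x| = 2 * H * y2f φ0 x := by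
    rw [← abs_mul]
    apply abs_of_pos
    have := hx.1
    rw [Set.mem_setOf_eq] at this
    nlinarith
  have hy2abs : |y2f φ0 x| ≠ 0 := abs_ne_zero.2 hy2
  have hden : (2 * H) * Real.sqrt ((x 1) ^ 2 + (x 2) ^ 2) ≠ 0 :=
    mul_ne_zero (by simp [hH]) (ne_of_gt hsR2)
  have key1 : Real.sqrt (2 * qqf H x + 1) / (2 * H)
      * Real.cos (Real.arctan (y3f φ0 x / y2f φ0 x)) = y2f φ0 x := by
    rw [Real.cos_arctan, hsq, hsqq, one_div, inv_div, div_mul_div_comm,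
      div_eq_iff hden]
    linear_combination Real.sqrt ((x 1) ^ 2 + (x 2) ^ 2) * habs
  refine ⟨key1, ?_⟩
  have hzc : Real.sin (Real.arctan (y3f φ0 x / y2f φ0 x))
      = (y3f φ0 x / y2f φ0 x) * Real.cos (Real.arctan (y3f φ0 x / y2f φ0 x)) := by
    rw [Real.sin_arctan, Real.cos_arctan]
    ring
  rw [hzc]
  calc Real.sqrt (2 * qqf H x + 1) / (2 * H) *
        ((y3f φ0 x / y2f φ0 x) * Real.cos (Real.arctan (y3f φ0 x / y2f φ0 x)))
      = (y3f φ0 x / y2f φ0 x) * (Real.sqrt (2 * qqf H x + 1) / (2 * H)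
          * Real.cos (Real.arctan (y3f φ0 x / y2f φ0 x))) := by ring
    _ = (y3f φ0 x / y2f φ0 x) * y2f φ0 x := by rw [key1]
    _ = y3f φ0 x := div_mul_cancel₀ _ hy2

lemma Psm_Phm {H φ0 ε : ℝ} (hH : H ≠ 0)
    (hF : ∀ z : ℝ, |z| < ε → Fsum z ≠ 0)
    {x : Fin 3 → ℝ} (hx : x ∈ sA H φ0 ε) : Psm H φ0 (Phm H φ0 x) = x := by
  obtain ⟨key1, key2⟩ := key_cos_sin hH hx
  have hEne : Efun H (qqf H x) ≠ 0 := Efun_ne_zero hH (hF _ hx.2)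
  have pyth := Real.sin_sq_add_cos_sq φ0
  funext i
  fin_cases i
  · show Psm H φ0 (Phm H φ0 x) 0 = x 0
    simp only [Psm, Phm, Matrix.cons_val_zero, Matrix.cons_val_two, Matrix.tail_cons,
      Matrix.head_cons, Matrix.cons_val_one]
    field_simp
    ring
  · show Psm H φ0 (Phm H φ0 x) 1 = x 1
    simp only [Psm, Phm, Matrix.cons_val_one, Matrix.head_cons, Matrix.cons_val_zero]
    rw [Real.cos_add]
    have hexp : Real.sqrt (2 * qqf H x + 1) / (2 * H) *
        (Real.cos (Real.arctan (y3f φ0 x / y2f φ0 x)) * Real.cos φ0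
          - Real.sin (Real.arctan (y3f φ0 x / y2f φ0 x)) * Real.sin φ0)
        = y2f φ0 x * Real.cos φ0 - y3f φ0 x * Real.sin φ0 := by
      linear_combination (Real.cos φ0) * key1 - (Real.sin φ0) * key2
    rw [hexp]
    unfold y2f y3f
    linear_combination (x 1) * pyth
  · show Psm H φ0 (Phm H φ0 x) 2 = x 2
    simp only [Psm, Phm, Matrix.cons_val_two, Matrix.tail_cons, Matrix.head_cons,
      Matrix.cons_val_zero, Matrix.cons_val_one]
    rw [Real.sin_add]
    have hexp : Real.sqrt (2 * qqf H x + 1) / (2 * H) *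
        (Real.sin (Real.arctan (y3f φ0 x / y2f φ0 x)) * Real.cos φ0
          + Real.cos (Real.arctan (y3f φ0 x / y2f φ0 x)) * Real.sin φ0)
        = y3f φ0 x * Real.cos φ0 + y2f φ0 x * Real.sin φ0 := by
      linear_combination (Real.cos φ0) * key2 + (Real.sin φ0) * key1
    rw [hexp]
    unfold y2f y3f
    linear_combination (x 2) * pyth


lemma Psm_y2 (H φ0 : ℝ) (y : Fin 3 → ℝ) :
    y2f φ0 (Psm H φ0 y) = Real.sqrt (2 * (y 1) + 1) / (2 * H) * Real.cos (y 0) := by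
  have hccos : Real.cos (y 0 + φ0) * Real.cos φ0 + Real.sin (y 0 + φ0) * Real.sin φ0
      = Real.cos (y 0) := by
    rw [← Real.cos_sub]
    congr 1
    ring
  unfold y2f Psm
  simp only [Matrix.cons_val_one, Matrix.head_cons, Matrix.cons_val_two, Matrix.tail_cons,
    Matrix.cons_val_zero]
  rw [← hccos]
  ring

lemma Psm_y3 (H φ0 : ℝ) (y : Fin 3 → ℝ) :
    y3f φ0 (Psm H φ0 y) = Real.sqrt (2 * (y 1) + 1) / (2 * H) * Real.sin (y 0) := by
  have hcsin : Real.sin (y 0 + φ0) * Real.cos φ0 - Real.cos (y 0 + φ0) * Real.sin φ0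
      = Real.sin (y 0) := by
    rw [← Real.sin_sub]
    congr 1
    ring
  unfold y3f Psm
  simp only [Matrix.cons_val_one, Matrix.head_cons, Matrix.cons_val_two, Matrix.tail_cons,
    Matrix.cons_val_zero]
  rw [← hcsin]
  ring

lemma Psm_qq {H : ℝ} (hH : H ≠ 0) (φ0 : ℝ) {y : Fin 3 → ℝ}
    (hpos : (0:ℝ) < 2 * (y 1) + 1) : qqf H (Psm H φ0 y) = y 1 := by
  have pyth := Real.sin_sq_add_cos_sq (y 0 + φ0)
  have hsq : Real.sqrt (2 * (y 1) + 1) ^ 2 = 2 * (y 1) + 1 :=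
    Real.sq_sqrt (le_of_lt hpos)
  unfold qqf Psm
  simp only [Matrix.cons_val_one, Matrix.head_cons, Matrix.cons_val_two, Matrix.tail_cons,
    Matrix.cons_val_zero]
  field_simp
  linear_combination 4 * Real.sqrt (2 * (y 1) + 1) ^ 2 * pyth + 4 * hsq

lemma Phm_Psm {H φ0 ε : ℝ} (hH : H ≠ 0) (hε : ε ≤ 1/8)
    (hF : ∀ z : ℝ, |z| < ε → Fsum z ≠ 0)
    {y : Fin 3 → ℝ} (hy : y ∈ tA ε) : Phm H φ0 (Psm H φ0 y) = y := by
  have hy0m : |y 0| < Real.pi / 2 := hy.1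
  have hy1m : |y 1| < ε := hy.2
  have hy0 := abs_lt.1 hy0m
  have hy1 := abs_lt.1 hy1m
  have hpos : (0:ℝ) < 2 * (y 1) + 1 := by nlinarith [hy1.1]
  have hsq : Real.sqrt (2 * (y 1) + 1) ^ 2 = 2 * (y 1) + 1 :=
    Real.sq_sqrt (le_of_lt hpos)
  have hspos : (0:ℝ) < Real.sqrt (2 * (y 1) + 1) := Real.sqrt_pos.2 hpos
  have hcospos : (0:ℝ) < Real.cos (y 0) :=
    Real.cos_pos_of_mem_Ioo ⟨hy0.1, hy0.2⟩
  have hy2x := Psm_y2 H φ0 y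
  have hy3x := Psm_y3 H φ0 y
  have hκ : Real.sqrt (2 * (y 1) + 1) / (2 * H) ≠ 0 :=
    div_ne_zero (ne_of_gt hspos) (by simp [hH])
  have hqqx : qqf H (Psm H φ0 y) = y 1 := Psm_qq hH φ0 hpos
  have harct : Real.arctan (y3f φ0 (Psm H φ0 y) / y2f φ0 (Psm H φ0 y)) = y 0 := by
    rw [hy2x, hy3x, mul_div_mul_left _ _ hκ, ← Real.tan_eq_sin_div_cos,
      Real.arctan_tan hy0.1 hy0.2]
  have hEne : Efun H (y 1) ≠ 0 := Efun_ne_zero hH (hF _ hy1m)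
  funext i
  fin_cases i
  · show Phm H φ0 (Psm H φ0 y) 0 = y 0
    simp only [Phm, Matrix.cons_val_zero]
    exact harct
  · show Phm H φ0 (Psm H φ0 y) 1 = y 1
    simp only [Phm, Matrix.cons_val_one, Matrix.head_cons]
    exact hqqx
  · show Phm H φ0 (Psm H φ0 y) 2 = y 2
    simp only [Phm, Matrix.cons_val_two, Matrix.tail_cons, Matrix.head_cons]
    rw [harct, hqqx]
    show (Psm H φ0 y 0 + (y 0 + φ0) / (2 * H)) / Efun H (y 1) = y 2
    simp only [Psm, Matrix.cons_val_zero]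
    field_simp
    ring

lemma mapsTo_Phm {H φ0 ε : ℝ} :
    Set.MapsTo (Phm H φ0) (sA H φ0 ε) (tA ε) := by
  intro x hx
  constructor
  · show |Phm H φ0 x 0| < Real.pi / 2
    simp only [Phm, Matrix.cons_val_zero]
    rw [abs_lt]
    exact ⟨Real.neg_pi_div_two_lt_arctan _, Real.arctan_lt_pi_div_two _⟩
  · show |Phm H φ0 x 1| < ε
    simp only [Phm, Matrix.cons_val_one, Matrix.head_cons]
    exact hx.2

lemma mapsTo_Psm {H φ0 ε : ℝ} (hH : H ≠ 0) (hε : ε ≤ 1/8) :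
    Set.MapsTo (Psm H φ0) (tA ε) (sA H φ0 ε) := by
  intro y hy
  have hy0m : |y 0| < Real.pi / 2 := hy.1
  have hy1m : |y 1| < ε := hy.2
  have hy0 := abs_lt.1 hy0m
  have hy1 := abs_lt.1 hy1m
  have hpos : (0:ℝ) < 2 * (y 1) + 1 := by nlinarith [hy1.1]
  have hspos : (0:ℝ) < Real.sqrt (2 * (y 1) + 1) := Real.sqrt_pos.2 hpos
  have hcospos : (0:ℝ) < Real.cos (y 0) :=
    Real.cos_pos_of_mem_Ioo ⟨hy0.1, hy0.2⟩
  have hy2x := Psm_y2 H φ0 y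
  have hqqx : qqf H (Psm H φ0 y) = y 1 := Psm_qq hH φ0 hpos
  constructor
  · show 0 < H * y2f φ0 (Psm H φ0 y)
    rw [hy2x]
    have : H * (Real.sqrt (2 * (y 1) + 1) / (2 * H) * Real.cos (y 0))
        = Real.sqrt (2 * (y 1) + 1) / 2 * Real.cos (y 0) := by
      field_simp
    rw [this]
    positivity
  · show |qqf H (Psm H φ0 y)| < ε
    rw [hqqx]
    exact hy1m

end CD25
namespace CD25
open Real

lemma key_step {H ε : ℝ} (hH : H ≠ 0) (hε8 : ε ≤ 1/8)
    (hF : ∀ z : ℝ, |z| < ε → Fsum z ≠ 0) (φ0 : ℝ) {w : ℝ × ℝ}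
    (hw : w ∈ Set.Ioo (-(Real.pi/4)) (Real.pi/4) ×ˢ Set.Ioo (-ε) ε) :
    X15 H (phm H φ0 w) ∈ sA H φ0 ε ∧
      Phm H φ0 (X15 H (phm H φ0 w)) = ![w.1, w.2 ^ 2, w.2 ^ 5] := by
  obtain ⟨hu, hv⟩ := hw
  obtain ⟨hu1, hu2⟩ := hu
  obtain ⟨hv1, hv2⟩ := hv
  have hπ := Real.pi_pos
  have hcosu : (0:ℝ) < Real.cos w.1 :=
    Real.cos_pos_of_mem_Ioo ⟨by linarith, by linarith⟩
  have hvabs : |w.2| < ε := abs_lt.2 ⟨hv1, hv2⟩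
  have hv8 : |w.2| ≤ 1/8 := le_of_lt (lt_of_lt_of_le hvabs hε8)
  have hsqv : (0:ℝ) < 2 * w.2 ^ 2 + 1 := by positivity
  have hsqrtpos : (0:ℝ) < Real.sqrt (2 * w.2 ^ 2 + 1) := Real.sqrt_pos.2 hsqv
  have hsq : Real.sqrt (2 * w.2 ^ 2 + 1) ^ 2 = 2 * w.2 ^ 2 + 1 :=
    Real.sq_sqrt (le_of_lt hsqv)
  have hρ : ρ15 H w.2 ≠ 0 := by
    unfold ρ15
    exact div_ne_zero (ne_of_gt hsqrtpos) (by simp [hH])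
  have hv2abs : |w.2 ^ 2| < ε := by
    rw [abs_of_nonneg (sq_nonneg _), ← sq_abs]
    nlinarith [abs_nonneg w.2]
  rw [X15_phm hH φ0 w]
  set x : Fin 3 → ℝ :=
    ![lam15 H w.2 + -(1 / (2 * H)) * (w.1 + φ0),
      ρ15 H w.2 * Real.cos (w.1 + φ0),
      ρ15 H w.2 * Real.sin (w.1 + φ0)] with hx
  have hx0 : x 0 = lam15 H w.2 + -(1 / (2 * H)) * (w.1 + φ0) := rfl
  have hx1 : x 1 = ρ15 H w.2 * Real.cos (w.1 + φ0) := rfl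
  have hx2 : x 2 = ρ15 H w.2 * Real.sin (w.1 + φ0) := rfl
  have hccos : Real.cos (w.1 + φ0) * Real.cos φ0 + Real.sin (w.1 + φ0) * Real.sin φ0
      = Real.cos w.1 := by
    rw [← Real.cos_sub]
    congr 1
    ring
  have hcsin : Real.sin (w.1 + φ0) * Real.cos φ0 - Real.cos (w.1 + φ0) * Real.sin φ0
      = Real.sin w.1 := by
    rw [← Real.sin_sub]
    congr 1
    ring
  have hy2 : y2f φ0 x = ρ15 H w.2 * Real.cos w.1 := by
    unfold y2f
    rw [hx1, hx2, ← hccos]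
    ring
  have hy3 : y3f φ0 x = ρ15 H w.2 * Real.sin w.1 := by
    unfold y3f
    rw [hx1, hx2, ← hcsin]
    ring
  have hqq : qqf H x = w.2 ^ 2 := by
    unfold qqf
    rw [hx1, hx2]
    unfold ρ15
    have pyth := Real.sin_sq_add_cos_sq (w.1 + φ0)
    field_simp
    linear_combination 4 * Real.sqrt (2 * w.2 ^ 2 + 1) ^ 2 * pyth
      + 4 * hsq
  have hmem : x ∈ sA H φ0 ε := by
    constructor
    · show 0 < H * y2f φ0 x
      rw [hy2]
      unfold ρ15
      have : H * (Real.sqrt (2 * w.2 ^ 2 + 1) / (2 * H) * Real.cos w.1)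
          = Real.sqrt (2 * w.2 ^ 2 + 1) / 2 * Real.cos w.1 := by
        field_simp
      rw [this]
      positivity
    · show |qqf H x| < ε
      rw [hqq]
      exact hv2abs
  refine ⟨hmem, ?_⟩
  have harct : Real.arctan (y3f φ0 x / y2f φ0 x) = w.1 := by
    rw [hy2, hy3, mul_div_mul_left _ _ hρ, ← Real.tan_eq_sin_div_cos,
      Real.arctan_tan (by linarith) (by linarith)]
  have hEne : Efun H (w.2 ^ 2) ≠ 0 := Efun_ne_zero hH (hF _ hv2abs)
  have hlam := lam15_eq H hH hv8
  funext i
  fin_cases i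
  · show Phm H φ0 x 0 = w.1
    simp only [Phm, Matrix.cons_val_zero]
    exact harct
  · show Phm H φ0 x 1 = w.2 ^ 2
    simp only [Phm, Matrix.cons_val_one, Matrix.head_cons]
    exact hqq
  · show Phm H φ0 x 2 = w.2 ^ 5
    simp only [Phm, Matrix.cons_val_two, Matrix.tail_cons, Matrix.head_cons]
    rw [harct, hqq, hx0, hlam]
    field_simp
    ring

end CD25

/-- The singular points of the conjugate of a spacelike Delaunay surface with lightlike
axis (first profile) are exactly the points with `r = 0`, and every singular point is a
(2,5)-cuspidal edge. -/
theorem conj_delaunay_lightlike_cuspidal25 (H : ℝ) (hH : H ≠ 0) :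
    (∀ p : ℝ × ℝ, IsSingularPt (X15 H) p ↔ p.1 = 0) ∧
    (∀ p : ℝ × ℝ, IsSingularPt (X15 H) p → IsCuspidalEdge25 Set.univ (X15 H) p) := by
  refine ⟨CD25.singular_iff H hH, ?_⟩
  intro p hp
  have hp1 : p.1 = 0 := (CD25.singular_iff H hH p).1 hp
  obtain ⟨ε, hε, hε8, hF⟩ := CD25.exists_good_eps
  set φ0 : ℝ := Real.sqrt 2 * H * p.2 with hφ0
  have hπ := Real.pi_pos
  set s : Set (ℝ × ℝ) := Set.Ioo (-(Real.pi/4)) (Real.pi/4) ×ˢ Set.Ioo (-ε) ε with hs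
  have hsopen : IsOpen s := IsOpen.prod isOpen_Ioo isOpen_Ioo
  have h00 : ((0:ℝ), (0:ℝ)) ∈ s := by
    constructor
    · constructor <;> simp <;> linarith
    · constructor <;> simp [hε]
  have hgfun0 : CD25.gfun 0 = 0 := by simp [CD25.gfun]
  have hphm00 : CD25.phm H φ0 ((0:ℝ), (0:ℝ)) = p := by
    have h2H : Real.sqrt 2 * H ≠ 0 := by
      have : Real.sqrt 2 ≠ 0 := by positivity
      exact mul_ne_zero this hH
    unfold CD25.phm
    rw [hgfun0]
    refine Prod.ext hp1.symm ?_
    show (0 + φ0 - 0) / (Real.sqrt 2 * H) = p.2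
    rw [hφ0]
    field_simp
    ring
  have hkey : ∀ w ∈ s, X15 H (CD25.phm H φ0 w) ∈ CD25.sA H φ0 ε ∧
      CD25.Phm H φ0 (X15 H (CD25.phm H φ0 w)) = ![w.1, w.2 ^ 2, w.2 ^ 5] :=
    fun w hw => CD25.key_step hH hε8 hF φ0 hw
  refine ⟨s, CD25.phminv H φ0 ⁻¹' s, CD25.phm H φ0, CD25.sA H φ0 ε, CD25.tA ε,
    CD25.Phm H φ0, h00, hphm00, Set.subset_univ _, CD25.isDiffeoOn_phm hH φ0 hsopen,
    ?_, ?_, hkey⟩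
  · have := (hkey _ h00).1
    rwa [hphm00] at this
  · refine ⟨CD25.isOpen_sA H φ0 ε, CD25.isOpen_tA ε,
      fun x hx => (CD25.contDiffAt_Phm hH hε8 hF hx).contDiffWithinAt, ?_,
      CD25.Psm H φ0, fun y hy => (CD25.contDiffAt_Psm hH hε8 hy).contDiffWithinAt,
      fun x hx => CD25.Psm_Phm hH hF hx, fun y hy => CD25.Phm_Psm hH hε8 hF hy⟩
    exact Set.InvOn.bijOn
      ⟨fun x hx => CD25.Psm_Phm hH hF hx, fun y hy => CD25.Phm_Psm hH hε8 hF hy⟩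
      CD25.mapsTo_Phm (CD25.mapsTo_Psm hH hε8)
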